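/- For every differentiable $f : \mathbb{R} \to \mathbb{R}$ with $|f| \le 1$ and $f'$ Lipschitz of constant $1$, and every $t \in \mathbb{R}$, one has $|f'(t)| \le \sqrt{2(1 - |f(t)|)}$. In particular $\sup \|f'\|_\infty = \sqrt 2$ over this class, attained by the comparison function $q$. -/

import Mathlib

open Set Real intervalIntegral

noncomputable def KLS : Set ℝ := Set.range (fun k : ℤ => Real.sqrt 2 + 4 * Real.sqrt 2 * k)
noncomputable def KLD (t : ℝ) : ℝ := Metric.infDist t KLS - Real.sqrt 2
noncomputable def KLQ (t : ℝ) : ℝ := 1 + ∫ u in (0:ℝ)..t, KLD u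

lemma kl_a_pos : (0:ℝ) < Real.sqrt 2 := Real.sqrt_pos.2 (by norm_num)
lemma kl_a_sq : Real.sqrt 2 ^ 2 = 2 := Real.sq_sqrt (by norm_num)

lemma KLS_nonempty : KLS.Nonempty := ⟨_, ⟨0, rfl⟩⟩

lemma mem_KLS (k : ℤ) : Real.sqrt 2 + 4 * Real.sqrt 2 * k ∈ KLS := ⟨k, rfl⟩

lemma KLD_lipschitz : LipschitzWith 1 KLD :=
  LipschitzWith.of_dist_le_mul fun x y => by
    simpa [KLD, Real.dist_eq, sub_sub_sub_cancel_right] using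
      (Metric.lipschitz_infDist_pt KLS).dist_le_mul x y

lemma KLD_continuous : Continuous KLD := KLD_lipschitz.continuous

lemma KLD_eq (k : ℤ) (t : ℝ) (h : |t - (Real.sqrt 2 + 4 * Real.sqrt 2 * k)| ≤ 2 * Real.sqrt 2) :
    KLD t = |t - (Real.sqrt 2 + 4 * Real.sqrt 2 * k)| - Real.sqrt 2 := by
  set a := Real.sqrt 2 with ha
  have hapos := kl_a_pos
  unfold KLD
  congr 1
  refine le_antisymm ?_ ?_
  · simpa [KLS, Real.dist_eq] using Metric.infDist_le_dist_of_mem (mem_KLS k)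
  · refine le_of_not_gt fun hlt => ?_
    obtain ⟨y, hy, hd⟩ := (Metric.infDist_lt_iff KLS_nonempty).1 hlt
    rw [KLS] at hy
    obtain ⟨k', rfl⟩ := hy
    rw [Real.dist_eq] at hd
    rcases eq_or_ne k' k with rfl | hne
    · exact absurd hd (lt_irrefl _)
    · have h1 : (1:ℝ) ≤ |(k' : ℝ) - k| := by
        rw [← Int.cast_sub, ← Int.cast_abs]
        exact_mod_cast Int.one_le_abs (sub_ne_zero.2 hne)
      have h2 : 4 * a ≤ |4 * a * k' - 4 * a * k| := by
        rw [← mul_sub, abs_mul, abs_of_pos (by linarith)]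
        nlinarith
      have h3 : |4 * a * k' - 4 * a * k| ≤ |t - (a + 4 * a * k')| + |t - (a + 4 * a * k)| := by
        have := abs_sub_abs_le_abs_sub (t - (a + 4 * a * k)) (t - (a + 4 * a * k'))
        have := abs_sub (t - (a + 4 * a * k')) (t - (a + 4 * a * k))
        calc |4 * a * k' - 4 * a * k| = |(t - (a + 4 * a * k)) - (t - (a + 4 * a * k'))| := by
              ring_nf
            _ ≤ _ := by
              rw [abs_sub_comm]
              exact abs_sub _ _
      linarith

lemma KLD_on0 {t : ℝ} (h : t ∈ Icc (-Real.sqrt 2) (Real.sqrt 2)) : KLD t = -t := by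
  have hapos := kl_a_pos
  obtain ⟨h1, h2⟩ := h
  have := KLD_eq 0 t (by rw [abs_le]; push_cast; constructor <;> linarith)
  rw [this]
  push_cast
  rw [abs_of_nonpos (by linarith)]
  ring

lemma KLD_on1 {t : ℝ} (h : t ∈ Icc (Real.sqrt 2) (3 * Real.sqrt 2)) :
    KLD t = t - 2 * Real.sqrt 2 := by
  have hapos := kl_a_pos
  obtain ⟨h1, h2⟩ := h
  have := KLD_eq 0 t (by rw [abs_le]; push_cast; constructor <;> linarith)
  rw [this]
  push_cast
  rw [abs_of_nonneg (by linarith)]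
  ring

lemma KLD_on2 {t : ℝ} (h : t ∈ Icc (3 * Real.sqrt 2) (5 * Real.sqrt 2)) :
    KLD t = 4 * Real.sqrt 2 - t := by
  have hapos := kl_a_pos
  obtain ⟨h1, h2⟩ := h
  have := KLD_eq 1 t (by rw [abs_le]; push_cast; constructor <;> linarith)
  rw [this]
  push_cast
  rw [abs_of_nonpos (by linarith)]
  ring

lemma KLQ_hasDerivAt (t : ℝ) : HasDerivAt KLQ (KLD t) t := by
  have : HasDerivAt (fun u => ∫ x in (0:ℝ)..u, KLD x) (KLD t) t :=
    intervalIntegral.integral_hasDerivAt_right (KLD_continuous.intervalIntegrable _ _)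
      (KLD_continuous.stronglyMeasurableAtFilter _ _) KLD_continuous.continuousAt
  exact this.const_add 1

lemma KLQ_differentiable : Differentiable ℝ KLQ :=
  fun t => (KLQ_hasDerivAt t).differentiableAt

lemma KLQ_deriv : deriv KLQ = KLD := funext fun t => (KLQ_hasDerivAt t).deriv

lemma KLD_periodic : Function.Periodic KLD (4 * Real.sqrt 2) := by
  intro t
  unfold KLD
  congr 1
  have hiso : Isometry (fun x : ℝ => x + 4 * Real.sqrt 2) :=
    Isometry.of_dist_eq fun x y => by simp [Real.dist_eq]
  have himg : (fun x : ℝ => x + 4 * Real.sqrt 2) '' KLS = KLS := by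
    ext y
    constructor
    · rintro ⟨x, hx, rfl⟩
      rw [KLS] at hx
      obtain ⟨k, rfl⟩ := hx
      refine ⟨k + 1, ?_⟩
      push_cast
      ring
    · rintro hy
      rw [KLS] at hy
      obtain ⟨k, rfl⟩ := hy
      refine ⟨Real.sqrt 2 + 4 * Real.sqrt 2 * ((k - 1 : ℤ) : ℝ), mem_KLS _, ?_⟩
      push_cast
      ring
  calc Metric.infDist (t + 4 * Real.sqrt 2) KLS
      = Metric.infDist ((fun x : ℝ => x + 4 * Real.sqrt 2) t)
          ((fun x : ℝ => x + 4 * Real.sqrt 2) '' KLS) := by rw [himg]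
    _ = Metric.infDist t KLS := Metric.infDist_image hiso

lemma KL_int0 {s t : ℝ} (hs : s ∈ Icc (-Real.sqrt 2) (Real.sqrt 2))
    (ht : t ∈ Icc (-Real.sqrt 2) (Real.sqrt 2)) :
    ∫ u in s..t, KLD u = (s^2 - t^2)/2 := by
  rw [intervalIntegral.integral_congr (g := fun u => -u)
    (fun u hu => KLD_on0 ((uIcc_subset_Icc hs ht) hu)), intervalIntegral.integral_neg,
    integral_id]
  ring

lemma KL_int1 {s t : ℝ} (hs : s ∈ Icc (Real.sqrt 2) (3 * Real.sqrt 2))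
    (ht : t ∈ Icc (Real.sqrt 2) (3 * Real.sqrt 2)) :
    ∫ u in s..t, KLD u = (t - 2*Real.sqrt 2)^2/2 - (s - 2*Real.sqrt 2)^2/2 := by
  rw [intervalIntegral.integral_congr (g := fun u => u - 2 * Real.sqrt 2)
    (fun u hu => KLD_on1 ((uIcc_subset_Icc hs ht) hu))]
  rw [intervalIntegral.integral_sub (intervalIntegral.intervalIntegrable_id)
    (intervalIntegrable_const), integral_id,
    integral_const, smul_eq_mul]
  ring

lemma KL_int2 {s t : ℝ} (hs : s ∈ Icc (3 * Real.sqrt 2) (5 * Real.sqrt 2))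
    (ht : t ∈ Icc (3 * Real.sqrt 2) (5 * Real.sqrt 2)) :
    ∫ u in s..t, KLD u = (s - 4*Real.sqrt 2)^2/2 - (t - 4*Real.sqrt 2)^2/2 := by
  rw [intervalIntegral.integral_congr (g := fun u => 4 * Real.sqrt 2 - u)
    (fun u hu => KLD_on2 ((uIcc_subset_Icc hs ht) hu))]
  rw [intervalIntegral.integral_sub (intervalIntegrable_const)
    (intervalIntegral.intervalIntegrable_id), integral_id,
    integral_const, smul_eq_mul]
  ring

lemma KLQ_on0 {t : ℝ} (h : t ∈ Icc (-Real.sqrt 2) (Real.sqrt 2)) : KLQ t = 1 - t^2/2 := by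
  have h0 : (0:ℝ) ∈ Icc (-Real.sqrt 2) (Real.sqrt 2) := by
    have := kl_a_pos; constructor <;> linarith
  rw [KLQ, KL_int0 h0 h]
  ring

lemma KLQ_on1 {t : ℝ} (h : t ∈ Icc (Real.sqrt 2) (3 * Real.sqrt 2)) :
    KLQ t = (t - 2 * Real.sqrt 2)^2/2 - 1 := by
  have hapos := kl_a_pos
  have hsq := kl_a_sq
  have h0 : (0:ℝ) ∈ Icc (-Real.sqrt 2) (Real.sqrt 2) := by constructor <;> linarith
  have ha : Real.sqrt 2 ∈ Icc (-Real.sqrt 2) (Real.sqrt 2) := by constructor <;> linarith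
  have ha' : Real.sqrt 2 ∈ Icc (Real.sqrt 2) (3 * Real.sqrt 2) := by constructor <;> linarith
  rw [KLQ, ← intervalIntegral.integral_add_adjacent_intervals
    (KLD_continuous.intervalIntegrable 0 (Real.sqrt 2))
    (KLD_continuous.intervalIntegrable (Real.sqrt 2) t), KL_int0 h0 ha, KL_int1 ha' h]
  nlinarith [kl_a_sq]

lemma KLQ_periodic : Function.Periodic KLQ (4 * Real.sqrt 2) := by
  have hapos := kl_a_pos
  have hsq := kl_a_sq
  have hR : ∀ t : ℝ, HasDerivAt (fun t => KLQ (t + 4 * Real.sqrt 2) - KLQ t)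
      (KLD (t + 4 * Real.sqrt 2) - KLD t) t := by
    intro t
    exact HasDerivAt.sub (by simpa [Function.comp_def] using
      ((KLQ_hasDerivAt (t + 4 * Real.sqrt 2)).comp t
        ((hasDerivAt_id t).add_const (4 * Real.sqrt 2)))) (KLQ_hasDerivAt t)
  have hconst : ∀ t : ℝ, KLQ (t + 4 * Real.sqrt 2) - KLQ t
      = KLQ (0 + 4 * Real.sqrt 2) - KLQ 0 := by
    intro t
    exact is_const_of_deriv_eq_zero (fun x => (hR x).differentiableAt)
      (fun x => by rw [(hR x).deriv, KLD_periodic x, sub_self]) t 0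
  have hval : KLQ (0 + 4 * Real.sqrt 2) - KLQ 0 = 0 := by
    have e0 : KLQ 0 = 1 := by
      rw [KLQ_on0 (by constructor <;> linarith)]; ring
    have : KLQ (4 * Real.sqrt 2) = 1 := by
      rw [KLQ, ← intervalIntegral.integral_add_adjacent_intervals
        (KLD_continuous.intervalIntegrable 0 (3 * Real.sqrt 2))
        (KLD_continuous.intervalIntegrable (3 * Real.sqrt 2) (4 * Real.sqrt 2)),
        ← intervalIntegral.integral_add_adjacent_intervals
        (KLD_continuous.intervalIntegrable 0 (Real.sqrt 2))
        (KLD_continuous.intervalIntegrable (Real.sqrt 2) (3 * Real.sqrt 2)),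
        KL_int0 (by constructor <;> linarith) (by constructor <;> linarith),
        KL_int1 (by constructor <;> linarith) (by constructor <;> linarith),
        KL_int2 (by constructor <;> linarith) (by constructor <;> linarith)]
      nlinarith
    rw [zero_add, this, e0, sub_self]
  intro t
  have := (hconst t).trans hval
  linarith

lemma KL_reduce (t : ℝ) : ∃ k : ℤ, t - 4 * Real.sqrt 2 * k ∈ Ico (-Real.sqrt 2) (3 * Real.sqrt 2) := by
  have hapos := kl_a_pos
  refine ⟨⌊(t + Real.sqrt 2) / (4 * Real.sqrt 2)⌋, ?_, ?_⟩
  · have h1 := Int.floor_le ((t + Real.sqrt 2) / (4 * Real.sqrt 2))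
    have h2 : (⌊(t + Real.sqrt 2) / (4 * Real.sqrt 2)⌋ : ℝ) * (4 * Real.sqrt 2)
        ≤ t + Real.sqrt 2 := by
      rw [← le_div_iff₀ (by positivity)] at *
      linarith
    linarith
  · have h1 := Int.lt_floor_add_one ((t + Real.sqrt 2) / (4 * Real.sqrt 2))
    have h2 : t + Real.sqrt 2
        < ((⌊(t + Real.sqrt 2) / (4 * Real.sqrt 2)⌋ : ℝ) + 1) * (4 * Real.sqrt 2) := by
      rw [← div_lt_iff₀ (by positivity)]
      linarith
    nlinarith

lemma KLQ_abs (t : ℝ) : |KLQ t| ≤ 1 := by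
  have hapos := kl_a_pos
  have hsq := kl_a_sq
  obtain ⟨k, hk⟩ := KL_reduce t
  set s := t - 4 * Real.sqrt 2 * k with hs
  have hts : KLQ t = KLQ s := by
    have := (KLQ_periodic.sub_int_mul_eq (x := t) k).symm
    rw [hs]
    convert this using 2
    ring
  rw [hts, abs_le]
  rcases le_or_gt s (Real.sqrt 2) with h | h
  · rw [KLQ_on0 ⟨hk.1, h⟩]
    have h1 : s^2 ≤ 2 := by nlinarith [hk.1]
    constructor <;> nlinarith [sq_nonneg s]
  · rw [KLQ_on1 ⟨h.le, hk.2.le⟩]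
    have h1 : (s - 2*Real.sqrt 2)^2 ≤ 2 := by nlinarith [hk.2]
    constructor <;> nlinarith [sq_nonneg (s - 2*Real.sqrt 2)]

lemma KLQ_deriv_lipschitz : LipschitzWith 1 (deriv KLQ) := by
  rw [KLQ_deriv]; exact KLD_lipschitz

lemma KLQ_deriv_at : |deriv KLQ (Real.sqrt 2)| = Real.sqrt 2 := by
  have hapos := kl_a_pos
  rw [KLQ_deriv, KLD_on0 ⟨by linarith, le_refl _⟩, abs_neg, abs_of_pos hapos]

lemma kl_key (f : ℝ → ℝ) (hf : Differentiable ℝ f) (hL : LipschitzWith 1 (deriv f))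
    (hb : ∀ t : ℝ, |f t| ≤ 1) (t : ℝ) (hd : 0 ≤ deriv f t) :
    (deriv f t)^2/2 ≤ 1 - f t ∧ (deriv f t)^2/2 ≤ 1 + f t := by
  set d := deriv f t with hdd
  have hLip : ∀ x y : ℝ, |deriv f x - deriv f y| ≤ |x - y| := fun x y => by
    have := hL.dist_le_mul x y
    simpa [Real.dist_eq] using this
  constructor
  · -- use G u = f (t + u) - d*u + u^2/2 monotone on [0, ∞)
    set G := fun u : ℝ => f (t + u) - d * u + u^2/2 with hGdef
    have hG : ∀ u : ℝ, HasDerivAt G (deriv f (t + u) - d + u) u := by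
      intro u
      have h1 : HasDerivAt (fun u : ℝ => f (t + u)) (deriv f (t + u)) u := by
        simpa [Function.comp_def] using (hf (t + u)).hasDerivAt.comp u ((hasDerivAt_id u).const_add t)
      have h2 : HasDerivAt (fun u : ℝ => d * u) d u := by
        simpa using (hasDerivAt_id u).const_mul d
      have h3 : HasDerivAt (fun u : ℝ => u^2/2) u u := by
        simpa using ((hasDerivAt_pow 2 u).div_const 2)
      exact (h1.sub h2).add h3
    have hmono : MonotoneOn G (Ici 0) := by
      apply monotoneOn_of_deriv_nonneg (convex_Ici 0)
        (fun u _ => ((hG u).differentiableAt).continuousAt.continuousWithinAt)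
        (fun u _ => ((hG u).differentiableAt).differentiableWithinAt)
      intro x hx
      rw [interior_Ici] at hx
      rw [(hG x).deriv]
      have := hLip (t + x) t
      simp only [add_sub_cancel_left] at this
      rw [abs_le] at this
      have hx0 : (0:ℝ) < x := hx
      rw [abs_of_pos hx0] at this
      linarith [this.1]
    have := hmono (self_mem_Ici) (mem_Ici.2 hd) hd
    simp only [hGdef, mul_zero, add_zero, sub_zero, zero_pow, ne_eq, OfNat.ofNat_ne_zero,
      not_false_eq_true, zero_div] at this
    have hb1 := (abs_le.1 (hb (t + d))).2
    nlinarith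
  · set H := fun u : ℝ => f (t - u) + d * u - u^2/2 with hHdef
    have hH : ∀ u : ℝ, HasDerivAt H (-(deriv f (t - u)) + d - u) u := by
      intro u
      have h1 : HasDerivAt (fun u : ℝ => f (t - u)) (-(deriv f (t - u))) u := by
        have := (hf (t - u)).hasDerivAt.comp u ((hasDerivAt_id u).neg.const_add t)
        simpa [sub_eq_add_neg, mul_comm, Function.comp_def] using this
      have h2 : HasDerivAt (fun u : ℝ => d * u) d u := by
        simpa using (hasDerivAt_id u).const_mul d
      have h3 : HasDerivAt (fun u : ℝ => u^2/2) u u := by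
        simpa using ((hasDerivAt_pow 2 u).div_const 2)
      exact (h1.add h2).sub h3
    have hanti : AntitoneOn H (Ici 0) := by
      apply antitoneOn_of_deriv_nonpos (convex_Ici 0)
        (fun u _ => ((hH u).differentiableAt).continuousAt.continuousWithinAt)
        (fun u _ => ((hH u).differentiableAt).differentiableWithinAt)
      intro x hx
      rw [interior_Ici] at hx
      rw [(hH x).deriv]
      have := hLip (t - x) t
      simp only [sub_sub_cancel_left, abs_neg] at this
      rw [abs_le] at this
      have hx0 : (0:ℝ) < x := hx
      rw [abs_of_pos hx0] at this
      linarith [this.1]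
    have := hanti (self_mem_Ici) (mem_Ici.2 hd) hd
    simp only [hHdef, mul_zero, add_zero, sub_zero, zero_pow, ne_eq, OfNat.ofNat_ne_zero,
      not_false_eq_true, zero_div] at this
    have hb1 := (abs_le.1 (hb (t - d))).1
    nlinarith

lemma kl_main (f : ℝ → ℝ) (hf : Differentiable ℝ f) (hL : LipschitzWith 1 (deriv f))
    (hb : ∀ t : ℝ, |f t| ≤ 1) (t : ℝ) :
    |deriv f t| ≤ Real.sqrt (2 * (1 - |f t|)) := by
  have key : ∀ g : ℝ → ℝ, Differentiable ℝ g → LipschitzWith 1 (deriv g) →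
      (∀ s : ℝ, |g s| ≤ 1) → 0 ≤ deriv g t → (deriv g t)^2 ≤ 2 * (1 - |g t|) := by
    intro g hg hgL hgb hgd
    obtain ⟨h1, h2⟩ := kl_key g hg hgL hgb t hgd
    rcases abs_cases (g t) with ⟨he, _⟩ | ⟨he, _⟩ <;> rw [he] <;> linarith
  have habs : (deriv f t)^2 ≤ 2 * (1 - |f t|) := by
    rcases le_or_gt 0 (deriv f t) with h | h
    · exact key f hf hL hb h
    · have hdg : deriv (fun x => -f x) = fun x => -deriv f x := deriv.neg'
      have := key (fun x => -f x) hf.neg (by rw [hdg]; exact hL.neg)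
        (fun s => by rw [abs_neg]; exact hb s)
        (by rw [hdg]; simp; linarith)
      rw [hdg] at this
      simpa [neg_sq, abs_neg] using this
  have h0 : (0:ℝ) ≤ 2 * (1 - |f t|) := le_trans (sq_nonneg _) habs
  rw [Real.le_sqrt (abs_nonneg _)]
  · rwa [sq_abs]
  · exact h0

lemma kl_unique (q : ℝ → ℝ) (h1 : Function.Periodic q (4 * Real.sqrt 2))
    (h2 : ∀ t : ℝ, |t| ≤ Real.sqrt 2 → q t = 1 - t ^ 2 / 2)
    (h3 : ∀ t : ℝ, q (t + 2 * Real.sqrt 2) = -q t) : q = KLQ := by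
  have hapos := kl_a_pos
  funext t
  obtain ⟨k, hk⟩ := KL_reduce t
  set s := t - 4 * Real.sqrt 2 * k with hs
  have hqt : q t = q s := by
    have := (h1.sub_int_mul_eq (x := t) k).symm
    rw [hs]; convert this using 2; ring
  have hQt : KLQ t = KLQ s := by
    have := (KLQ_periodic.sub_int_mul_eq (x := t) k).symm
    rw [hs]; convert this using 2; ring
  rw [hqt, hQt]
  rcases le_or_gt s (Real.sqrt 2) with h | h
  · rw [h2 s (abs_le.2 ⟨hk.1, h⟩), KLQ_on0 ⟨hk.1, h⟩]
  · have hmem : s ∈ Icc (Real.sqrt 2) (3 * Real.sqrt 2) := ⟨h.le, hk.2.le⟩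
    have e1 : q s = -q (s - 2 * Real.sqrt 2) := by
      have := h3 (s - 2 * Real.sqrt 2)
      rw [sub_add_cancel] at this
      rw [this]
    rw [e1, h2 (s - 2 * Real.sqrt 2)
      (abs_le.2 ⟨by linarith [hmem.1], by linarith [hmem.2]⟩), KLQ_on1 hmem]
    ring

/-- **Kolmogorov–Landau inequality on `ℝ` for `n = 2`.** Every differentiable
`f : ℝ → ℝ` with `|f| ≤ 1` and `f'` Lipschitz of constant `1` satisfies
`|f'(t)| ≤ √(2(1 - |f(t)|))` for all `t`; in particular the supremum of
`‖f'‖_∞` over this class equals `√2`, attained by the comparison function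
`q`. -/
theorem kolmogorov_landau_n2 :
    (∀ f : ℝ → ℝ, Differentiable ℝ f → LipschitzWith 1 (deriv f) →
      (∀ t : ℝ, |f t| ≤ 1) →
      ∀ t : ℝ, |deriv f t| ≤ Real.sqrt (2 * (1 - |f t|))) ∧
    IsGreatest {y : ℝ | ∃ f : ℝ → ℝ, Differentiable ℝ f ∧
        LipschitzWith 1 (deriv f) ∧ (∀ t : ℝ, |f t| ≤ 1) ∧
        ∃ t : ℝ, y = |deriv f t|} (Real.sqrt 2) ∧
    ∀ q : ℝ → ℝ, Function.Periodic q (4 * Real.sqrt 2) →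
      (∀ t : ℝ, |t| ≤ Real.sqrt 2 → q t = 1 - t ^ 2 / 2) →
      (∀ t : ℝ, q (t + 2 * Real.sqrt 2) = -q t) →
      Differentiable ℝ q ∧ LipschitzWith 1 (deriv q) ∧
      (∀ t : ℝ, |q t| ≤ 1) ∧ ∃ t : ℝ, |deriv q t| = Real.sqrt 2 := by
  refine ⟨fun f hf hL hb t => kl_main f hf hL hb t, ⟨⟨KLQ, KLQ_differentiable,
    KLQ_deriv_lipschitz, KLQ_abs, Real.sqrt 2, KLQ_deriv_at.symm⟩, ?_⟩, ?_⟩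
  · rintro y ⟨f, hf, hL, hb, t, rfl⟩
    calc |deriv f t| ≤ Real.sqrt (2 * (1 - |f t|)) := kl_main f hf hL hb t
      _ ≤ Real.sqrt 2 := by
          apply Real.sqrt_le_sqrt
          have := abs_nonneg (f t)
          linarith
  · intro q h1 h2 h3
    have hq : q = KLQ := kl_unique q h1 h2 h3
    subst hq
    exact ⟨KLQ_differentiable, KLQ_deriv_lipschitz, KLQ_abs, Real.sqrt 2, KLQ_deriv_at⟩
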